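/- Let G be an infinite connected graph with maximum degree at most d, and suppose every finite connected spanned subgraph A of G satisfies |∂A| ≥ ε·|V(A)|, i.e., the isoperimetric constant i(G) is at least ε. Then the bottom of the spectrum of the Laplacian Δ_G on ℓ²(V(G)) is bounded below by ε²/(2d), i.e., ⟨Δ_G f, f⟩ ≥ (ε²/(2d))·‖f‖² for all finitely supported f. -/

import Mathlib

open Finset

open Classical in
noncomputable def bdryF {V : Type*} (G : SimpleGraph V) (A : Finset V) : Finset V :=
  A.filter fun x => ∃ y ∉ A, G.Adj x y

lemma bdry {V : Type*} [DecidableEq V] (G : SimpleGraph V) (ε : ℝ)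
    (hiso : ∀ A : Finset V, A.Nonempty → (G.induce (A : Set V)).Connected →
      ε * A.card ≤ (Set.ncard {x : V | x ∈ A ∧ ∃ y ∉ A, G.Adj x y} : ℝ)) :
    ∀ (A : Finset V), A.Nonempty → ε * A.card ≤ ((bdryF G A).card : ℝ) := by
  classical
  intro A
  induction A using Finset.strongInduction with
  | _ A ih =>
    intro hA
    by_cases hc : (G.induce (A : Set V)).Connected
    · have h := hiso A hA hc
      have hset : {x : V | x ∈ A ∧ ∃ y ∉ A, G.Adj x y} = ↑(bdryF G A) := by
        ext x; simp [bdryF]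
      rwa [hset, Set.ncard_coe_finset] at h
    · have hne : Nonempty (A : Set V) := by
        obtain ⟨a, ha⟩ := hA
        exact ⟨⟨a, by simpa using ha⟩⟩
      rw [SimpleGraph.connected_iff] at hc
      push_neg at hc
      obtain ⟨u, v, huv⟩ : ∃ u v : (A : Set V), ¬ (G.induce (A : Set V)).Reachable u v := by
        by_contra h
        push_neg at h
        exact @IsEmpty.false _ (hc (fun a b => h a b)) hne.some
      set B : Finset V := A.filter
        (fun x => ∃ h : x ∈ (A : Set V), (G.induce (A : Set V)).Reachable u ⟨x, h⟩) with hBdef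
      set C : Finset V := A \ B with hCdef
      have hBA : B ⊆ A := filter_subset _ _
      have hCA : C ⊆ A := sdiff_subset
      have huA : (u : V) ∈ A := by simpa using u.2
      have hvA : (v : V) ∈ A := by simpa using v.2
      have huB : (u : V) ∈ B := by
        rw [hBdef, mem_filter]
        exact ⟨huA, u.2, by rw [Subtype.coe_eta]⟩
      have hvB : (v : V) ∉ B := by
        rw [hBdef, mem_filter]
        rintro ⟨-, h, hr⟩
        exact huv (by rwa [Subtype.coe_eta] at hr)
      have hvC : (v : V) ∈ C := mem_sdiff.mpr ⟨hvA, hvB⟩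
      have huC : (u : V) ∉ C := fun h => (mem_sdiff.mp h).2 huB
      have hsep : ∀ x ∈ B, ∀ y ∈ C, ¬ G.Adj x y := by
        intro x hx y hy hadj
        obtain ⟨hxA, hxm, hr⟩ := mem_filter.mp hx
        obtain ⟨hyA, hyB⟩ := mem_sdiff.mp hy
        apply hyB
        rw [hBdef, mem_filter]
        refine ⟨hyA, by simpa using hyA, hr.trans (SimpleGraph.Adj.reachable ?_)⟩
        exact hadj
      have hBsub : bdryF G B ⊆ bdryF G A := by
        intro x hx
        simp only [bdryF, mem_filter] at hx ⊢
        obtain ⟨hxB, y, hyB, hadj⟩ := hx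
        refine ⟨hBA hxB, y, fun hyA => ?_, hadj⟩
        exact hsep x hxB y (mem_sdiff.mpr ⟨hyA, hyB⟩) hadj
      have hCsub : bdryF G C ⊆ bdryF G A := by
        intro x hx
        simp only [bdryF, mem_filter] at hx ⊢
        obtain ⟨hxC, y, hyC, hadj⟩ := hx
        refine ⟨hCA hxC, y, fun hyA => ?_, hadj⟩
        by_cases hyB : y ∈ B
        · exact hsep y hyB x hxC hadj.symm
        · exact hyC (mem_sdiff.mpr ⟨hyA, hyB⟩)
      have hdisj : Disjoint (bdryF G B) (bdryF G C) := by
        apply Finset.disjoint_of_subset_left (filter_subset _ _)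
        apply Finset.disjoint_of_subset_right (filter_subset _ _)
        exact disjoint_sdiff
      have hcard : ((bdryF G B).card : ℝ) + (bdryF G C).card ≤ ((bdryF G A).card : ℝ) := by
        have := Finset.card_le_card (Finset.union_subset hBsub hCsub)
        rw [Finset.card_union_of_disjoint hdisj] at this
        exact_mod_cast this
      have hBss : B ⊂ A := (Finset.ssubset_iff_of_subset hBA).mpr ⟨v, hvA, hvB⟩
      have hCss : C ⊂ A := (Finset.ssubset_iff_of_subset hCA).mpr ⟨u, huA, huC⟩
      have ihB := ih B hBss ⟨u, huB⟩
      have ihC := ih C hCss ⟨v, hvC⟩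
      have h1 := Finset.card_sdiff_add_card_eq_card hBA
      have hsum : (B.card : ℝ) + C.card = A.card := by
        rw [hCdef]
        exact_mod_cast (by omega : (B.card + (A \ B).card : ℕ) = A.card)
      have h2 : ε * (A.card : ℝ) = ε * B.card + ε * C.card := by rw [← hsum]; ring
      linarith [hcard, ihB, ihC]


lemma key_lemma {V : Type*} [DecidableEq V] (G : SimpleGraph V) [DecidableRel G.Adj] [G.LocallyFinite] (ε : ℝ) (hε : 0 < ε)
    (hbd : ∀ A : Finset V, A.Nonempty → ε * A.card ≤ ((bdryF G A).card : ℝ))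
    (T : Finset V) :
    ∀ (n : ℕ) (g : V → ℝ) (A : Finset V), (∀ x, 0 ≤ g x) →
      (∀ x, g x ≠ 0 ↔ x ∈ A) →
      (∀ x ∈ A, x ∈ T ∧ ∀ y ∈ G.neighborFinset x, y ∈ T) →
      A.card = n →
      2 * ε * ∑ x ∈ T, g x ≤ ∑ x ∈ T, ∑ y ∈ G.neighborFinset x, |g x - g y| := by
  classical
  intro n
  induction n using Nat.strong_induction_on with
  | _ n ih =>
    intro g A hg hA hAT hcard
    rcases A.eq_empty_or_nonempty with hAe | hAne
    · have hg0 : ∀ x, g x = 0 := by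
        intro x
        by_contra h
        exact (Finset.notMem_empty x) (hAe ▸ (hA x).mp h)
      simp [hg0]
    · have hAsubT : A ⊆ T := fun x hx => (hAT x hx).1
      set m : ℝ := A.inf' hAne g with hmdef
      obtain ⟨x₀, hx₀A, hx₀⟩ := A.exists_mem_eq_inf' hAne g
      have hmle : ∀ x ∈ A, m ≤ g x := fun x hx => Finset.inf'_le g hx
      have hmpos : 0 < m := by
        rw [hmdef, hx₀]
        exact lt_of_le_of_ne (hg x₀) (Ne.symm ((hA x₀).mpr hx₀A))
      set g' : V → ℝ := fun x => if x ∈ A then g x - m else g x with hg'def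
      have hg'0 : ∀ x, 0 ≤ g' x := by
        intro x
        simp only [hg'def]
        split_ifs with h
        · linarith [hmle x h]
        · exact hg x
      have hgA0 : ∀ x, x ∉ A → g x = 0 := by
        intro x hx
        by_contra h
        exact hx ((hA x).mp h)
      have hg'sub : ∀ x, g' x ≠ 0 → x ∈ A := by
        intro x h
        by_contra hx
        simp only [hg'def, if_neg hx] at h
        exact h (hgA0 x hx)
      set A' : Finset V := A.filter (fun x => g' x ≠ 0) with hA'def
      have hA'A : A' ⊆ A := filter_subset _ _
      have hA' : ∀ x, g' x ≠ 0 ↔ x ∈ A' := by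
        intro x
        rw [hA'def, mem_filter]
        exact ⟨fun h => ⟨hg'sub x h, h⟩, fun h => h.2⟩
      have hx₀' : g' x₀ = 0 := by simp [hg'def, hx₀A, ← hx₀, hmdef]
      have hA'lt : A'.card < n := by
        have hsub : A' ⊆ A.erase x₀ := by
          intro x hx
          rcases mem_filter.mp hx with ⟨hxA, hx0⟩
          refine Finset.mem_erase.mpr ⟨?_, hxA⟩
          rintro rfl
          exact hx0 hx₀'
        calc A'.card ≤ (A.erase x₀).card := Finset.card_le_card hsub
          _ < A.card := Finset.card_erase_lt_of_mem hx₀A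
          _ = n := hcard
      have IH := ih A'.card hA'lt g' A' hg'0 hA'
        (fun x hx => hAT x (hA'A hx)) rfl
      -- sum decomposition
      have hsum1 : ∑ x ∈ T, g x = ∑ x ∈ T, g' x + m * A.card := by
        have : ∑ x ∈ T, (g x - g' x) = ∑ x ∈ T, (if x ∈ A then m else 0) := by
          apply Finset.sum_congr rfl
          intro x _
          simp only [hg'def]
          split_ifs <;> ring
        rw [Finset.sum_ite_mem, Finset.inter_eq_right.mpr hAsubT, Finset.sum_const] at this
        rw [Finset.sum_sub_distrib, nsmul_eq_mul] at this
        linarith [this]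
      -- pointwise decomposition
      set c : V → V → ℝ := fun x y =>
        if x ∈ A then (if y ∈ A then 0 else m) else (if y ∈ A then m else 0) with hcdef
      have hpt : ∀ x y, |g x - g y| = |g' x - g' y| + c x y := by
        intro x y
        by_cases hx : x ∈ A <;> by_cases hy : y ∈ A <;>
          simp only [hcdef, hg'def, if_pos, if_neg, hx, hy, if_true, if_false]
        · ring_nf
        · rw [hgA0 y hy, sub_zero, sub_zero, abs_of_nonneg (hg x),
            abs_of_nonneg (by linarith [hmle x hx])]
          ring
        · rw [hgA0 x hx, zero_sub, zero_sub, abs_neg, abs_neg, abs_of_nonneg (hg y),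
            abs_of_nonneg (by linarith [hmle y hy])]
          ring
        · rw [hgA0 x hx, hgA0 y hy]
          norm_num
      have hsum2 : ∑ x ∈ T, ∑ y ∈ G.neighborFinset x, |g x - g y|
          = ∑ x ∈ T, ∑ y ∈ G.neighborFinset x, |g' x - g' y|
            + ∑ x ∈ T, ∑ y ∈ G.neighborFinset x, c x y := by
        rw [← Finset.sum_add_distrib]
        apply Finset.sum_congr rfl
        intro x _
        rw [← Finset.sum_add_distrib]
        exact Finset.sum_congr rfl fun y _ => hpt x y
      -- crossing count
      have hcrossA : ∀ x ∈ A, ∑ y ∈ G.neighborFinset x, c x y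
          = m * ((G.neighborFinset x \ A).card : ℝ) := by
        intro x hx
        simp only [hcdef, if_pos hx]
        rw [Finset.sum_ite, Finset.sum_const_zero, Finset.sum_const, zero_add]
        rw [← Finset.sdiff_eq_filter]
        push_cast
        ring
      have hcrossT : ∀ x, x ∉ A → ∑ y ∈ G.neighborFinset x, c x y
          = m * ((G.neighborFinset x ∩ A).card : ℝ) := by
        intro x hx
        simp only [hcdef, if_neg hx]
        rw [Finset.sum_ite, Finset.sum_const, Finset.sum_const_zero, add_zero]
        rw [Finset.filter_mem_eq_inter]
        push_cast
        ring
      -- double counting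
      have hdouble : ∑ x ∈ T \ A, ((G.neighborFinset x ∩ A).card : ℕ)
          = ∑ y ∈ A, (G.neighborFinset y \ A).card := by
        have e1 : ∀ x, (G.neighborFinset x ∩ A).card = ∑ y ∈ A, if G.Adj x y then 1 else 0 := by
          intro x
          rw [Finset.sum_ite, Finset.sum_const, Finset.sum_const_zero, add_zero, smul_eq_mul,
            mul_one]
          congr 1
          ext y
          simp [SimpleGraph.mem_neighborFinset, and_comm]
        have e2 : ∀ y ∈ A, (T \ A).filter (fun x => G.Adj x y) = G.neighborFinset y \ A := by
          intro y hy
          ext x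
          simp only [Finset.mem_filter, Finset.mem_sdiff, SimpleGraph.mem_neighborFinset]
          constructor
          · rintro ⟨⟨hxT, hxA⟩, hadj⟩
            exact ⟨hadj.symm, hxA⟩
          · rintro ⟨hadj, hxA⟩
            exact ⟨⟨(hAT y hy).2 x (by simpa [SimpleGraph.mem_neighborFinset] using hadj),
              hxA⟩, hadj.symm⟩
        calc ∑ x ∈ T \ A, (G.neighborFinset x ∩ A).card
            = ∑ x ∈ T \ A, ∑ y ∈ A, (if G.Adj x y then 1 else 0) := by
              exact Finset.sum_congr rfl fun x _ => e1 x
          _ = ∑ y ∈ A, ∑ x ∈ T \ A, (if G.Adj x y then 1 else 0) := Finset.sum_comm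
          _ = ∑ y ∈ A, ((T \ A).filter (fun x => G.Adj x y)).card := by
              apply Finset.sum_congr rfl
              intro y _
              rw [Finset.sum_ite, Finset.sum_const, Finset.sum_const_zero, add_zero,
                smul_eq_mul, mul_one]
          _ = ∑ y ∈ A, (G.neighborFinset y \ A).card := by
              exact Finset.sum_congr rfl fun y hy => by rw [e2 y hy]
      -- boundary bound
      have hebd : ((bdryF G A).card : ℝ) ≤ ∑ x ∈ A, ((G.neighborFinset x \ A).card : ℝ) := by
        have h1 : ∀ x ∈ bdryF G A, (1 : ℝ) ≤ ((G.neighborFinset x \ A).card : ℝ) := by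
          intro x hx
          simp only [bdryF, mem_filter] at hx
          obtain ⟨hxA, y, hyA, hadj⟩ := hx
          have : y ∈ G.neighborFinset x \ A := by
            simp [SimpleGraph.mem_neighborFinset, hadj, hyA]
          have := Finset.card_pos.mpr ⟨y, this⟩
          exact_mod_cast this
        calc ((bdryF G A).card : ℝ) = ∑ _x ∈ bdryF G A, (1 : ℝ) := by simp
          _ ≤ ∑ x ∈ bdryF G A, ((G.neighborFinset x \ A).card : ℝ) :=
              Finset.sum_le_sum h1
          _ ≤ ∑ x ∈ A, ((G.neighborFinset x \ A).card : ℝ) := by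
              apply Finset.sum_le_sum_of_subset_of_nonneg (filter_subset _ _)
              intro i _ _
              exact Nat.cast_nonneg _
      -- total crossing sum
      have hcross : 2 * (m * ε) * A.card ≤ ∑ x ∈ T, ∑ y ∈ G.neighborFinset x, c x y := by
        have hsplit : ∑ x ∈ T, ∑ y ∈ G.neighborFinset x, c x y
            = ∑ x ∈ T \ A, (∑ y ∈ G.neighborFinset x, c x y)
              + ∑ x ∈ A, (∑ y ∈ G.neighborFinset x, c x y) :=
          (Finset.sum_sdiff hAsubT).symm
        have hTA : ∑ x ∈ T \ A, (∑ y ∈ G.neighborFinset x, c x y)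
            = m * ∑ x ∈ A, ((G.neighborFinset x \ A).card : ℝ) := by
          rw [Finset.sum_congr rfl (fun x hx => hcrossT x (Finset.mem_sdiff.mp hx).2),
            ← Finset.mul_sum]
          congr 1
          exact_mod_cast congrArg (Nat.cast : ℕ → ℝ) hdouble
        have hAA : ∑ x ∈ A, (∑ y ∈ G.neighborFinset x, c x y)
            = m * ∑ x ∈ A, ((G.neighborFinset x \ A).card : ℝ) := by
          rw [Finset.sum_congr rfl hcrossA, ← Finset.mul_sum]
        rw [hsplit, hTA, hAA]
        have hb := hbd A hAne
        have := hebd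
        nlinarith [hmpos.le, hb, hebd]
      -- assemble
      have hfinal : 2 * ε * ∑ x ∈ T, g' x ≤ ∑ x ∈ T, ∑ y ∈ G.neighborFinset x, |g' x - g' y| := IH
      rw [hsum1, hsum2]
      nlinarith [hfinal, hcross]

theorem main_aux {V : Type*} [Infinite V] [DecidableEq V]
    (G : SimpleGraph V) [DecidableRel G.Adj] [G.LocallyFinite] (hconn : G.Connected)
    (d : ℕ) (hd : 0 < d) (hdeg : ∀ v, G.degree v ≤ d) (ε : ℝ) (hε : 0 < ε)
    (hbdry : ∀ A : Finset V, A.Nonempty → ε * A.card ≤ ((bdryF G A).card : ℝ))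
    (hkey : ∀ (T : Finset V) (n : ℕ) (g : V → ℝ) (A : Finset V), (∀ x, 0 ≤ g x) →
      (∀ x, g x ≠ 0 ↔ x ∈ A) →
      (∀ x ∈ A, x ∈ T ∧ ∀ y ∈ G.neighborFinset x, y ∈ T) →
      A.card = n →
      2 * ε * ∑ x ∈ T, g x ≤ ∑ x ∈ T, ∑ y ∈ G.neighborFinset x, |g x - g y|)
    (f : V → ℝ) (hf : (Function.support f).Finite) :
    (ε ^ 2 / (2 * d)) * ∑ᶠ x, (f x) ^ 2 ≤
      ∑ᶠ x, ((G.degree x : ℝ) * f x - ∑ y ∈ G.neighborFinset x, f y) * f x := by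
  classical
  set S : Finset V := hf.toFinset with hSdef
  set T : Finset V := S ∪ S.biUnion (fun x => G.neighborFinset x) with hTdef
  have hfS : ∀ x, f x ≠ 0 → x ∈ S := fun x hx => hf.mem_toFinset.mpr hx
  have hST : S ⊆ T := Finset.subset_union_left
  have hNT : ∀ x ∈ S, ∀ y ∈ G.neighborFinset x, y ∈ T := by
    intro x hx y hy
    exact Finset.subset_union_right (Finset.mem_biUnion.mpr ⟨x, hx, hy⟩)
  have hf0 : ∀ x, x ∉ S → f x = 0 := fun x hx => by
    by_contra h; exact hx (hfS x h)
  set P : Finset (V × V) := (T ×ˢ T).filter (fun p => G.Adj p.1 p.2) with hPdef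
  have L1 : ∀ h : V → V → ℝ, (∀ x y, f x = 0 → f y = 0 → h x y = 0) →
      ∑ x ∈ T, ∑ y ∈ G.neighborFinset x, h x y = ∑ p ∈ P, h p.1 p.2 := by
    intro h hh
    rw [hPdef, Finset.sum_filter, Finset.sum_product]
    apply Finset.sum_congr rfl
    intro x hxT
    rw [← Finset.sum_filter]
    have hfil : T.filter (fun y => G.Adj x y) = T ∩ G.neighborFinset x := by
      ext y
      simp [SimpleGraph.mem_neighborFinset]
    rw [hfil]
    symm
    apply Finset.sum_subset Finset.inter_subset_right
    intro y hyN hyT'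
    have hyT : y ∉ T := fun hT => hyT' (Finset.mem_inter.mpr ⟨hT, hyN⟩)
    have hfy : f y = 0 := hf0 y (fun hS => hyT (hST hS))
    have hfx : f x = 0 := by
      by_contra hx
      exact hyT (hNT x (hfS x hx) y hyN)
    exact hh x y hfx hfy
  have hPswap : ∀ p : V × V, p ∈ P → p.swap ∈ P := by
    rintro ⟨x, y⟩ hp
    simp only [hPdef, Finset.mem_filter, Finset.mem_product] at hp ⊢
    exact ⟨⟨hp.1.2, hp.1.1⟩, hp.2.symm⟩
  have L2 : ∀ h : V → V → ℝ, ∑ p ∈ P, h p.1 p.2 = ∑ p ∈ P, h p.2 p.1 := by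
    intro h
    exact Finset.sum_nbij' Prod.swap Prod.swap hPswap hPswap
      (fun p _ => Prod.swap_swap p) (fun p _ => Prod.swap_swap p) (fun p _ => rfl)
  set N2 : ℝ := ∑ x ∈ S, f x ^ 2 with hN2def
  set degS : ℝ := ∑ x ∈ S, (G.degree x : ℝ) * f x ^ 2 with hdegSdef
  set Q : ℝ := ∑ x ∈ S, ((G.degree x : ℝ) * f x - ∑ y ∈ G.neighborFinset x, f y) * f x with hQdef
  have hP1 : ∑ p ∈ P, f p.1 ^ 2 = degS := by
    rw [← L1 (fun x y => f x ^ 2) (by intro x y h1 h2; simp [h1])]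
    have step : ∀ x ∈ T, ∑ _y ∈ G.neighborFinset x, f x ^ 2 = (G.degree x : ℝ) * f x ^ 2 := by
      intro x _
      rw [Finset.sum_const, nsmul_eq_mul, G.card_neighborFinset_eq_degree]
    rw [Finset.sum_congr rfl step]
    symm
    apply Finset.sum_subset hST
    intro x _ hxS
    simp [hf0 x hxS]
  have hP2 : ∑ p ∈ P, f p.2 ^ 2 = degS := by
    rw [L2 (fun a b => f b ^ 2)]
    exact hP1
  have hPcross : ∑ p ∈ P, f p.1 * f p.2 = ∑ x ∈ S, ∑ y ∈ G.neighborFinset x, f x * f y := by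
    rw [← L1 (fun x y => f x * f y) (by intro x y h1 h2; simp [h1])]
    symm
    apply Finset.sum_subset hST
    intro x _ hxS
    simp [hf0 x hxS]
  have hQ : Q = degS - ∑ p ∈ P, f p.1 * f p.2 := by
    rw [hQdef, hPcross, hdegSdef, ← Finset.sum_sub_distrib]
    apply Finset.sum_congr rfl
    intro x _
    rw [← Finset.mul_sum]
    ring
  have hD : ∑ p ∈ P, (f p.1 - f p.2) ^ 2 = 2 * Q := by
    have step : ∑ p ∈ P, (f p.1 - f p.2) ^ 2
        = ∑ p ∈ P, f p.1 ^ 2 + ∑ p ∈ P, f p.2 ^ 2 - 2 * ∑ p ∈ P, (f p.1 * f p.2) := by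
      rw [← Finset.sum_add_distrib, Finset.mul_sum, ← Finset.sum_sub_distrib]
      exact Finset.sum_congr rfl (fun p _ => by ring)
    rw [step, hP1, hP2, hQ]
    ring
  have hD0 : 0 ≤ ∑ p ∈ P, (f p.1 - f p.2) ^ 2 :=
    Finset.sum_nonneg (fun p _ => sq_nonneg _)
  have hQ0 : 0 ≤ Q := by linarith [hD ▸ hD0]
  have hN20 : 0 ≤ N2 := Finset.sum_nonneg (fun x _ => sq_nonneg _)
  -- key lemma application
  have hE : 2 * ε * N2 ≤ ∑ p ∈ P, |f p.1 ^ 2 - f p.2 ^ 2| := by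
    have hA : ∀ x, f x ^ 2 ≠ 0 ↔ x ∈ S := by
      intro x
      rw [pow_ne_zero_iff (two_ne_zero)]
      exact ⟨hfS x, fun h => by simpa using hf.mem_toFinset.mp h⟩
    have hk := hkey T S.card (fun x => f x ^ 2) S (fun x => sq_nonneg _) hA
      (fun x hx => ⟨hST hx, fun y hy => hNT x hx y hy⟩) rfl
    have hTsum : ∑ x ∈ T, f x ^ 2 = N2 := by
      symm
      apply Finset.sum_subset hST
      intro x _ hxS
      simp [hf0 x hxS]
    rw [hTsum, L1 (fun x y => |f x ^ 2 - f y ^ 2|) (by intro x y h1 h2; simp [h1, h2])] at hk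
    exact hk
  -- Cauchy–Schwarz
  have hCS : (∑ p ∈ P, |f p.1 ^ 2 - f p.2 ^ 2|) ^ 2
      ≤ (∑ p ∈ P, (f p.1 - f p.2) ^ 2) * (∑ p ∈ P, (f p.1 + f p.2) ^ 2) := by
    have h := Finset.sum_mul_sq_le_sq_mul_sq P (fun p => |f p.1 - f p.2|)
      (fun p => |f p.1 + f p.2|)
    have e1 : ∀ p : V × V, |f p.1 - f p.2| * |f p.1 + f p.2| = |f p.1 ^ 2 - f p.2 ^ 2| := by
      intro p
      rw [← abs_mul]
      congr 1
      ring
    have e2 : ∀ p : V × V, |f p.1 - f p.2| ^ 2 = (f p.1 - f p.2) ^ 2 := fun p => sq_abs _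
    have e3 : ∀ p : V × V, |f p.1 + f p.2| ^ 2 = (f p.1 + f p.2) ^ 2 := fun p => sq_abs _
    calc (∑ p ∈ P, |f p.1 ^ 2 - f p.2 ^ 2|) ^ 2
        = (∑ p ∈ P, |f p.1 - f p.2| * |f p.1 + f p.2|) ^ 2 := by
          rw [Finset.sum_congr rfl (fun p _ => (e1 p).symm)]
      _ ≤ (∑ p ∈ P, |f p.1 - f p.2| ^ 2) * ∑ p ∈ P, |f p.1 + f p.2| ^ 2 := h
      _ = (∑ p ∈ P, (f p.1 - f p.2) ^ 2) * (∑ p ∈ P, (f p.1 + f p.2) ^ 2) := by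
          rw [Finset.sum_congr rfl (fun p _ => e2 p), Finset.sum_congr rfl (fun p _ => e3 p)]
  have hdegSd : degS ≤ d * N2 := by
    rw [hdegSdef, hN2def, Finset.mul_sum]
    apply Finset.sum_le_sum
    intro x _
    exact mul_le_mul_of_nonneg_right (by exact_mod_cast hdeg x) (sq_nonneg _)
  have hB : ∑ p ∈ P, (f p.1 + f p.2) ^ 2 ≤ 4 * d * N2 := by
    have h1 : ∑ p ∈ P, (f p.1 + f p.2) ^ 2
        ≤ ∑ p ∈ P, (2 * f p.1 ^ 2 + 2 * f p.2 ^ 2) := by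
      apply Finset.sum_le_sum
      intro p _
      nlinarith [sq_nonneg (f p.1 - f p.2)]
    have h2 : ∑ p ∈ P, (2 * f p.1 ^ 2 + 2 * f p.2 ^ 2)
        = 2 * (∑ p ∈ P, f p.1 ^ 2) + 2 * (∑ p ∈ P, f p.2 ^ 2) := by
      rw [Finset.sum_add_distrib, Finset.mul_sum, Finset.mul_sum]
    rw [h2, hP1, hP2] at h1
    linarith [hdegSd]
  -- finsum conversions
  have hL : ∑ᶠ x, (f x) ^ 2 = N2 := by
    apply finsum_eq_sum_of_support_subset
    intro x hx
    simp only [Function.mem_support] at hx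
    have : f x ≠ 0 := fun h => hx (by rw [h]; ring)
    simpa using hfS x this
  have hR : ∑ᶠ x, ((G.degree x : ℝ) * f x - ∑ y ∈ G.neighborFinset x, f y) * f x = Q := by
    apply finsum_eq_sum_of_support_subset
    intro x hx
    simp only [Function.mem_support] at hx
    have : f x ≠ 0 := fun h => hx (by rw [h]; ring)
    simpa using hfS x this
  rw [hL, hR]
  -- final arithmetic
  rcases eq_or_lt_of_le hN20 with h | h
  · rw [← h, mul_zero]
    exact hQ0
  · have hd' : (0 : ℝ) < d := by exact_mod_cast hd
    have hEnn : 0 ≤ 2 * ε * N2 := by positivity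
    have key1 : (2 * ε * N2) ^ 2 ≤ (2 * Q) * (4 * d * N2) := by
      calc (2 * ε * N2) ^ 2 ≤ (∑ p ∈ P, |f p.1 ^ 2 - f p.2 ^ 2|) ^ 2 := by
            apply pow_le_pow_left₀ hEnn hE
        _ ≤ (∑ p ∈ P, (f p.1 - f p.2) ^ 2) * (∑ p ∈ P, (f p.1 + f p.2) ^ 2) := hCS
        _ ≤ (2 * Q) * (4 * d * N2) := by
            rw [hD] at hD0 ⊢
            exact mul_le_mul_of_nonneg_left hB hD0
    rw [div_mul_eq_mul_div, div_le_iff₀ (by positivity)]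
    nlinarith [key1, h, hQ0, hε.le]

/-- Cheeger-type inequality for infinite graphs: if `G` is an infinite connected locally finite
graph with maximum degree at most `d` and every finite connected spanned subgraph `A` satisfies
`|∂A| ≥ ε|V(A)|`, then the quadratic form of the Laplacian satisfies
`⟨Δ_G f, f⟩ ≥ (ε²/(2d)) ‖f‖²` for every finitely supported `f : V → ℝ`. -/
theorem infinite_cheeger_inequality {V : Type*} [Infinite V] [DecidableEq V]
    (G : SimpleGraph V) [DecidableRel G.Adj] [G.LocallyFinite] (hconn : G.Connected)
    (d : ℕ) (hd : 0 < d) (hdeg : ∀ v, G.degree v ≤ d) (ε : ℝ) (hε : 0 < ε)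
    (hiso : ∀ A : Finset V, A.Nonempty → (G.induce (A : Set V)).Connected →
      ε * A.card ≤ (Set.ncard {x : V | x ∈ A ∧ ∃ y ∉ A, G.Adj x y} : ℝ))
    (f : V → ℝ) (hf : (Function.support f).Finite) :
    (ε ^ 2 / (2 * d)) * ∑ᶠ x, (f x) ^ 2 ≤
      ∑ᶠ x, ((G.degree x : ℝ) * f x - ∑ y ∈ G.neighborFinset x, f y) * f x := by
  exact main_aux G hconn d hd hdeg ε hε (bdry G ε hiso)
    (fun T => key_lemma G ε hε (bdry G ε hiso) T) f hf
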